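/- Let N ≥ 1 and J = (J_{i,j}) ∈ M_{2^N × N}(𝕊) with rows J_i ∈ 𝕊^N, and suppose the 2^N × 2^N quaternionic matrix 𝓜(J) whose i-th row is ζ(J_i) = (J_i(1), ..., J_i(2^N)) is invertible. Then σ_N 𝓜(J)⁻¹ = 𝓜(J)⁻¹ D_N(J), where D_N(J) = diag(J_{1,N}, J_{2,N}, ..., J_{2^N,N}) and σ_N is the real matrix with σ_{i,j} = (−1)^{N+j} if i+j = 2^N+1 and 0 otherwise. -/

import Mathlib

noncomputable section

abbrev Hq := Quaternion ℝ

/-- The sphere of imaginary units of the quaternions. -/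
def SphereS : Set Hq := {q | q ^ 2 = -1}

/-- The identification of `ℂ` with the slice plane `ℂ_I = ℝ + ℝI`. -/
def sliceEmb (I : Hq) : ℂ → Hq := fun z => (z.re : Hq) + (z.im : Hq) * I

/-- The slice complex plane `ℂ_I = ℝ + ℝI`. -/
def sliceC (I : Hq) : Set Hq := Set.range (sliceEmb I)

/-- The slice-topology on the quaternions: the quotient topology induced by the
canonical map from the disjoint union of the slices, i.e. the supremum of the
topologies coinduced by the parametrizations of the slices. -/
def sliceTopology : TopologicalSpace Hq :=
  ⨆ I ∈ SphereS, TopologicalSpace.coinduced (sliceEmb I) inferInstance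

/-- The real line inside the quaternions. -/
def realLine : Set Hq := Set.range (fun x : ℝ => (x : Hq))

/-- `g : ℂ → ℍ` (thought of as a function on the slice `ℂ_I`) is (left) holomorphic on
`U`: real differentiable with `∂ₓ g + I ∂_y g = 0`. -/
def SliceHolomorphicOn (I : Hq) (g : ℂ → Hq) (U : Set ℂ) : Prop :=
  ∀ z ∈ U, ∃ L : ℂ →L[ℝ] Hq, HasFDerivAt g L z ∧ L 1 + I * L Complex.I = 0

/-- A function on a slice-open set is slice regular if it is holomorphic on each slice. -/
def SliceRegular (f : Hq → Hq) (Ω : Set Hq) : Prop :=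
  ∀ I ∈ SphereS, SliceHolomorphicOn I (f ∘ sliceEmb I) (sliceEmb I ⁻¹' Ω)

/-- `K(m)` for `K ∈ 𝕊^N` (with `K 0 = 1` by convention) and `1 ≤ m ≤ 2^N`:
`∏_{i=N}^{1} (K_i K_{i-1})^{m_i}` where `(m_N … m_1)₂` is the binary expansion of `m-1`. -/
def zetaTerm (K : ℕ → Hq) (N m : ℕ) : Hq :=
  ((List.range N).reverse.map
    (fun j => (K (j + 1) * K j) ^ (if Nat.testBit (m - 1) j then 1 else 0))).prod

lemma zetaTerm_succ (K : ℕ → Hq) (N m : ℕ) :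
    zetaTerm K (N+1) m =
      (K (N+1) * K N) ^ (if Nat.testBit (m-1) N then 1 else 0) * zetaTerm K N m := by
  unfold zetaTerm
  rw [List.range_succ, List.reverse_append]
  simp

lemma zetaTerm_congr (K : ℕ → Hq) (N : ℕ) {m m' : ℕ}
    (h : ∀ j < N, (m-1).testBit j = (m'-1).testBit j) :
    zetaTerm K N m = zetaTerm K N m' := by
  unfold zetaTerm
  congr 1
  apply List.map_congr_left
  intro j hj
  rw [List.mem_reverse, List.mem_range] at hj
  rw [h j hj]

lemma key (K : ℕ → Hq) (hK0 : K 0 = 1) :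
    ∀ n, (∀ k, 1 ≤ k → k ≤ n+1 → K k ^ 2 = -1) →
    ∀ m, m < 2^(n+1) →
      K (n+1) * zetaTerm K (n+1) (m+1) =
        (-1 : Hq)^(n+m) * zetaTerm K (n+1) (2^(n+1) - m) := by
  intro n
  induction n with
  | zero =>
    intro hS m hm
    have h1 : K 1 * K 1 = -1 := by
      have := hS 1 le_rfl le_rfl; rwa [pow_two] at this
    interval_cases m
    · simp [zetaTerm, hK0, List.range_succ, Nat.testBit_one_zero]
    · simp [zetaTerm, hK0, List.range_succ, Nat.testBit_one_zero, h1]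
  | succ n ih =>
    intro hS m hm
    have hS' : ∀ k, 1 ≤ k → k ≤ n+1 → K k ^ 2 = -1 :=
      fun k h1 h2 => hS k h1 (h2.trans (Nat.le_succ _))
    have hKn1 : K (n+1) * K (n+1) = -1 := by
      have := hS (n+1) (by omega) (by omega); rwa [pow_two] at this
    have hKn2 : K (n+2) * K (n+2) = -1 := by
      have := hS (n+2) (by omega) (by omega); rwa [pow_two] at this
    have hpos : (0:ℕ) < 2^(n+1) := Nat.pow_pos (by norm_num)
    have hpow : (2:ℕ)^(n+2) = 2^(n+1) + 2^(n+1) := by ring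
    show K (n+2) * zetaTerm K (n+2) (m+1) =
        (-1 : Hq)^(n+1+m) * zetaTerm K (n+2) (2^(n+2) - m)
    have e1 : zetaTerm K (n+2) (m+1) =
        (K (n+2) * K (n+1)) ^ (if Nat.testBit m (n+1) then 1 else 0)
          * zetaTerm K (n+1) (m+1) := by
      simpa using zetaTerm_succ K (n+1) (m+1)
    have e2 : zetaTerm K (n+2) (2^(n+2) - m) =
        (K (n+2) * K (n+1)) ^ (if Nat.testBit (2^(n+2) - m - 1) (n+1) then 1 else 0)
          * zetaTerm K (n+1) (2^(n+2) - m) :=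
      zetaTerm_succ K (n+1) (2^(n+2) - m)
    by_cases hb : m < 2^(n+1)
    · -- high bit of m is false
      have hbit : Nat.testBit m (n+1) = false := Nat.testBit_lt_two_pow hb
      have hx : 2^(n+2) - m - 1 = 2^(n+1) + (2^(n+1) - m - 1) := by omega
      have hbit2 : Nat.testBit (2^(n+2) - m - 1) (n+1) = true := by
        rw [hx, Nat.testBit_two_pow_add_eq, Nat.testBit_lt_two_pow (by omega)]
        rfl
      have hcongr : zetaTerm K (n+1) (2^(n+2) - m) = zetaTerm K (n+1) (2^(n+1) - m) := by
        apply zetaTerm_congr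
        intro j hj
        rw [show 2^(n+2) - m - 1 = 2^(n+1) + (2^(n+1) - m - 1) from hx,
          Nat.testBit_two_pow_add_gt hj]
      have hIH := ih hS' m hb
      have hz : zetaTerm K (n+1) (m+1) =
          -(K (n+1) * ((-1:Hq)^(n+m) * zetaTerm K (n+1) (2^(n+1) - m))) := by
        rw [← hIH, ← mul_assoc, hKn1, neg_one_mul, neg_neg]
      rw [e1, e2, hbit, hbit2, if_neg (by simp), if_pos rfl, pow_zero, pow_one,
        one_mul, hcongr, hz]
      have hsign : (-1:Hq)^(n+1+m) = -(-1:Hq)^(n+m) := by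
        rw [show n+1+m = (n+m)+1 from by omega, pow_succ, mul_neg_one]
      rw [hsign]
      rcases Nat.even_or_odd (n+m) with h | h
      · simp [h.neg_one_pow, mul_assoc]
      · simp [h.neg_one_pow, mul_assoc]
    · -- high bit of m is true
      set m' := m - 2^(n+1) with hm'
      have hm'lt : m' < 2^(n+1) := by omega
      have hmeq : m = 2^(n+1) + m' := by omega
      have hbit : Nat.testBit m (n+1) = true := by
        rw [hmeq, Nat.testBit_two_pow_add_eq, Nat.testBit_lt_two_pow hm'lt]
        rfl
      have hcongr : zetaTerm K (n+1) (m+1) = zetaTerm K (n+1) (m'+1) := by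
        apply zetaTerm_congr
        intro j hj
        simp only [Nat.add_sub_cancel]
        rw [hmeq, Nat.testBit_two_pow_add_gt hj]
      have hsub : 2^(n+2) - m = 2^(n+1) - m' := by omega
      have hbit2 : Nat.testBit (2^(n+2) - m - 1) (n+1) = false := by
        apply Nat.testBit_lt_two_pow
        omega
      have hIH := ih hS' m' hm'lt
      rw [e1, e2, hbit, hbit2, if_pos rfl, if_neg (by simp), pow_one, pow_zero,
        one_mul, hcongr, hsub, ← mul_assoc, ← mul_assoc, hKn2, neg_one_mul,
        neg_mul, hIH]
      have hsign : (-1:Hq)^(n+1+m) = -(-1:Hq)^(n+m') := by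
        rw [hmeq, show n+1+(2^(n+1)+m') = (n+m') + (2^n + 2^n) + 1 from by ring,
          pow_succ, pow_add, Even.neg_one_pow ⟨2^n, rfl⟩, mul_one, mul_neg_one]
      rw [hsign]
      rcases Nat.even_or_odd (n+m') with h | h
      · simp [h.neg_one_pow]
      · simp [h.neg_one_pow]

/-- The matrix `σ_N` (0-indexed): entry `(i,j)` is `(-1)^{N+(j+1)}` if
`(i+1)+(j+1) = 2^N + 1`, and `0` otherwise. -/
def sigmaMat (N : ℕ) : Matrix (Fin (2 ^ N)) (Fin (2 ^ N)) ℝ :=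
  Matrix.of fun i j =>
    if (i : ℕ) + (j : ℕ) = 2 ^ N - 1 then (-1 : ℝ) ^ (N + (j : ℕ) + 1) else 0

def QOrth (I J : Hq) : Prop := (I * star J).re = 0

/-- If `𝓜(J)` is invertible then `σ_N 𝓜(J)⁻¹ = 𝓜(J)⁻¹ D_N(J)`. -/
theorem sigma_inv_intertwine (N : ℕ) (hN : 1 ≤ N)
    (J : Fin (2 ^ N) → ℕ → Hq)
    (hJ0 : ∀ i, J i 0 = 1)
    (hJS : ∀ i k, 1 ≤ k → k ≤ N → J i k ∈ SphereS)
    (B : Matrix (Fin (2 ^ N)) (Fin (2 ^ N)) Hq)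
    (hB1 : (Matrix.of fun i m => zetaTerm (J i) N ((m : ℕ) + 1) :
      Matrix (Fin (2 ^ N)) (Fin (2 ^ N)) Hq) * B = 1)
    (hB2 : B * (Matrix.of fun i m => zetaTerm (J i) N ((m : ℕ) + 1) :
      Matrix (Fin (2 ^ N)) (Fin (2 ^ N)) Hq) = 1) :
    (sigmaMat N).map (fun r => (r : Hq)) * B =
      B * Matrix.diagonal (fun i => J i N) := by
  obtain ⟨n, rfl⟩ : ∃ n, N = n + 1 := ⟨N - 1, by omega⟩
  set M : Matrix (Fin (2 ^ (n+1))) (Fin (2 ^ (n+1))) Hq :=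
    Matrix.of fun i m => zetaTerm (J i) (n+1) ((m : ℕ) + 1) with hM
  set σ' : Matrix (Fin (2 ^ (n+1))) (Fin (2 ^ (n+1))) Hq :=
    (sigmaMat (n+1)).map (fun r => (r : Hq)) with hσ
  set D : Matrix (Fin (2 ^ (n+1))) (Fin (2 ^ (n+1))) Hq :=
    Matrix.diagonal (fun i => J i (n+1)) with hD
  have hDM : D * M = M * σ' := by
    apply Matrix.ext
    intro i m
    rw [hD, Matrix.diagonal_mul, Matrix.mul_apply]
    have hmlt : (m : ℕ) < 2 ^ (n+1) := m.isLt
    have hpos : (0:ℕ) < 2 ^ (n+1) := Nat.pow_pos (by norm_num)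
    set k₀ : Fin (2 ^ (n+1)) := ⟨2^(n+1) - 1 - (m : ℕ), by omega⟩ with hk₀
    rw [Finset.sum_eq_single k₀]
    · -- main term
      have hentry : σ' k₀ m = ((-1 : ℝ) ^ (n + 1 + (m:ℕ) + 1) : ℝ) := by
        rw [hσ, Matrix.map_apply, sigmaMat, Matrix.of_apply,
          if_pos (show (k₀:ℕ) + (m:ℕ) = 2^(n+1) - 1 by
            simp only [hk₀, Fin.val_mk]; omega)]
      rw [hentry]
      have hkey := key (J i) (hJ0 i) n (fun k h1 h2 => hJS i k h1 h2) (m : ℕ) hmlt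
      have hMk : M i k₀ = zetaTerm (J i) (n+1) (2^(n+1) - (m:ℕ)) := by
        rw [hM, Matrix.of_apply]
        congr 1
        show 2^(n+1) - 1 - (m:ℕ) + 1 = 2^(n+1) - (m:ℕ)
        omega
      rw [hMk]
      have hcast : (((-1 : ℝ) ^ (n + 1 + (m:ℕ) + 1) : ℝ) : Hq)
          = (-1 : Hq) ^ (n + (m:ℕ)) := by
        push_cast
        rw [show n + 1 + (m:ℕ) + 1 = (n + (m:ℕ)) + 2 from by omega, pow_add]
        norm_num
      show J i (n+1) * M i m
        = zetaTerm (J i) (n+1) (2^(n+1) - (m:ℕ)) * (((-1 : ℝ) ^ (n + 1 + (m:ℕ) + 1) : ℝ) : Hq)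
      rw [hcast, hM, Matrix.of_apply, hkey]
      rcases Nat.even_or_odd (n + (m:ℕ)) with h | h
      · simp [h.neg_one_pow]
      · simp [h.neg_one_pow]
    · intro b _ hbne
      have : (b : ℕ) + (m : ℕ) ≠ 2^(n+1) - 1 := by
        intro hcontra
        apply hbne
        apply Fin.ext
        show (b : ℕ) = 2^(n+1) - 1 - (m : ℕ)
        omega
      have : σ' b m = 0 := by
        rw [hσ, Matrix.map_apply, sigmaMat, Matrix.of_apply, if_neg this]
        simp
      rw [this, mul_zero]
    · intro h
      exact absurd (Finset.mem_univ k₀) h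
  -- conclude
  have e1 : B * (D * M) * B = B * D := by
    rw [← Matrix.mul_assoc, Matrix.mul_assoc (B * D) M B, hB1, Matrix.mul_one]
  have e2 : B * (M * σ') * B = σ' * B := by
    rw [← Matrix.mul_assoc B M σ', hB2, Matrix.one_mul]
  calc σ' * B = B * (M * σ') * B := e2.symm
    _ = B * (D * M) * B := by rw [hDM]
    _ = B * D := e1
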